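/- Suppose rank(X) = n. Let k be an integer with ν_n(X) ≤ k ≤ N and suppose that for every subset I ⊆ 𝕀 with |I| = k one has ‖X_I^⊤ (X_I X_I^⊤)^{−1} X_{I^c}‖_∞ ≤ 1 (the inverse exists since rank(X_I) = n when |I| = k ≥ ν_n(X)). Then every θ ∈ ℝ^n with |I⁰(θ)| ≥ k solves the ℓ1 problem, i.e., ‖φ(θ)‖₁ ≤ ‖φ(θ')‖₁ for all θ' ∈ ℝ^n. -/

import Mathlib

open Matrix Finset

/-- The `n × |S|` submatrix of the regressor matrix `X` formed by the columns
(regressors) indexed by the finite set `S`. -/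
noncomputable def colSub (n N : ℕ) (x : Fin N → Fin n → ℝ) (S : Finset (Fin N)) :
    Matrix (Fin n) {t // t ∈ S} ℝ :=
  Matrix.of fun i t => x t.1 i

/-- `ν_n(X)`: the smallest integer `m` such that every `n × m` submatrix of
columns of `X` has rank `n`. -/
noncomputable def nuX (n N : ℕ) (x : Fin N → Fin n → ℝ) : ℕ :=
  sInf {m : ℕ | ∀ S : Finset (Fin N), S.card = m → (colSub n N x S).rank = n}

/-- The Gram matrix `X_I X_I^⊤` of the columns of `X` indexed by `I`. -/
noncomputable def gramOn (n N : ℕ) (x : Fin N → Fin n → ℝ) (I : Finset (Fin N)) :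
    Matrix (Fin n) (Fin n) ℝ :=
  Matrix.of fun i j => ∑ t ∈ I, x t i * x t j

lemma colSub_rank_eq_span (n N : ℕ) (x : Fin N → Fin n → ℝ) (S : Finset (Fin N)) :
    (colSub n N x S).rank = Module.finrank ℝ (Submodule.span ℝ (x '' ↑S)) := by
  rw [Matrix.rank_eq_finrank_span_cols]
  have h : Set.range (colSub n N x S).col = x '' ↑S := by
    ext v
    constructor
    · rintro ⟨t, rfl⟩; exact ⟨t.1, t.2, rfl⟩
    · rintro ⟨t, ht, rfl⟩; exact ⟨⟨t, ht⟩, rfl⟩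
  rw [h]

lemma gramOn_eq (n N : ℕ) (x : Fin N → Fin n → ℝ) (I : Finset (Fin N)) :
    gramOn n N x I = colSub n N x I * (colSub n N x I)ᵀ := by
  ext i j
  simp only [gramOn, colSub, Matrix.mul_apply, Matrix.transpose_apply, Matrix.of_apply]
  rw [← Finset.sum_coe_sort I (fun t => x t i * x t j)]

lemma gramOn_symm (n N : ℕ) (x : Fin N → Fin n → ℝ) (I : Finset (Fin N)) :
    (gramOn n N x I)ᵀ = gramOn n N x I := by
  ext i j
  simp only [gramOn, Matrix.transpose_apply, Matrix.of_apply]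
  exact Finset.sum_congr rfl fun t _ => mul_comm _ _

lemma gram_det_isUnit (n N : ℕ) (x : Fin N → Fin n → ℝ) (I : Finset (Fin N))
    (hI : (colSub n N x I).rank = n) : IsUnit (gramOn n N x I).det := by
  have hrk : (gramOn n N x I).rank = n := by
    rw [gramOn_eq, Matrix.rank_self_mul_transpose, hI]
  -- surjectivity of mulVecLin
  have hr : LinearMap.range (Matrix.mulVecLin (gramOn n N x I)) = ⊤ := by
    apply Submodule.eq_top_of_finrank_eq
    rw [← Matrix.rank, hrk, Module.finrank_pi]
    simp
  have hsurj : Function.Surjective (Matrix.mulVecLin (gramOn n N x I)) :=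
    LinearMap.range_eq_top.mp hr
  have hinj : Function.Injective (Matrix.mulVecLin (gramOn n N x I)) :=
    (LinearMap.injective_iff_surjective).mpr hsurj
  rw [isUnit_iff_ne_zero]
  intro hdet
  obtain ⟨v, hv, hv0⟩ := (Matrix.exists_mulVec_eq_zero_iff).mpr hdet
  exact hv (hinj (by simpa [Matrix.mulVecLin_apply] using hv0))

lemma key_identity (n N : ℕ) (x : Fin N → Fin n → ℝ) (I : Finset (Fin N))
    (hG : IsUnit (gramOn n N x I).det) (δ : Fin n → ℝ) (t : Fin N) :
    x t ⬝ᵥ δ = ∑ s ∈ I, (x s ⬝ᵥ ((gramOn n N x I)⁻¹ *ᵥ x t)) * (x s ⬝ᵥ δ) := by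
  have hGsymm : (gramOn n N x I)ᵀ = gramOn n N x I := gramOn_symm n N x I
  have hinvsymm : ((gramOn n N x I)⁻¹)ᵀ = (gramOn n N x I)⁻¹ := by
    rw [Matrix.transpose_nonsing_inv, hGsymm]
  have hδ : δ = (gramOn n N x I)⁻¹ *ᵥ ((gramOn n N x I) *ᵥ δ) := by
    rw [Matrix.mulVec_mulVec, Matrix.nonsing_inv_mul _ hG, Matrix.one_mulVec]
  have hGδ : (gramOn n N x I) *ᵥ δ = fun i => ∑ s ∈ I, (x s ⬝ᵥ δ) * x s i := by
    funext i
    simp only [Matrix.mulVec, dotProduct, gramOn, Matrix.of_apply, Finset.sum_mul]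
    rw [Finset.sum_comm]
    refine Finset.sum_congr rfl fun s _ => ?_
    exact Finset.sum_congr rfl fun j _ => by ring
  have hswap : ∀ s : Fin N,
      x t ⬝ᵥ ((gramOn n N x I)⁻¹ *ᵥ x s) = x s ⬝ᵥ ((gramOn n N x I)⁻¹ *ᵥ x t) := by
    intro s
    have h1 : x t ᵥ* (gramOn n N x I)⁻¹ = (gramOn n N x I)⁻¹ *ᵥ x t := by
      conv_lhs => rw [← hinvsymm]
      exact Matrix.vecMul_transpose _ _
    rw [Matrix.dotProduct_mulVec, h1, dotProduct_comm]
  have hexp : ((gramOn n N x I)⁻¹ *ᵥ fun i => ∑ s ∈ I, (x s ⬝ᵥ δ) * x s i) =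
      fun i => ∑ s ∈ I, (x s ⬝ᵥ δ) * ((gramOn n N x I)⁻¹ *ᵥ x s) i := by
    funext i
    simp only [Matrix.mulVec, dotProduct, Finset.mul_sum]
    rw [Finset.sum_comm]
    refine Finset.sum_congr rfl fun s _ => ?_
    exact Finset.sum_congr rfl fun j _ => by ring
  conv_lhs => rw [hδ, hGδ, hexp]
  calc x t ⬝ᵥ (fun i => ∑ s ∈ I, (x s ⬝ᵥ δ) * ((gramOn n N x I)⁻¹ *ᵥ x s) i)
      = ∑ i, x t i * ∑ s ∈ I, (x s ⬝ᵥ δ) * ((gramOn n N x I)⁻¹ *ᵥ x s) i := rfl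
    _ = ∑ s ∈ I, ∑ i, x t i * ((x s ⬝ᵥ δ) * ((gramOn n N x I)⁻¹ *ᵥ x s) i) := by
        rw [Finset.sum_comm]
        exact Finset.sum_congr rfl fun i _ => Finset.mul_sum _ _ _
    _ = ∑ s ∈ I, (x s ⬝ᵥ δ) * (x t ⬝ᵥ ((gramOn n N x I)⁻¹ *ᵥ x s)) := by
        refine Finset.sum_congr rfl fun s _ => ?_
        simp only [dotProduct, Finset.mul_sum]
        exact Finset.sum_congr rfl fun i _ => by ring
    _ = ∑ s ∈ I, (x s ⬝ᵥ ((gramOn n N x I)⁻¹ *ᵥ x t)) * (x s ⬝ᵥ δ) := by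
        refine Finset.sum_congr rfl fun s _ => ?_
        rw [hswap s, mul_comm]

theorem stmt7 (n N : ℕ) (hn : 1 ≤ n) (hN : 1 ≤ N)
    (x : Fin N → Fin n → ℝ) (y : Fin N → ℝ)
    (hrank : (Matrix.of fun i t => x t i : Matrix (Fin n) (Fin N) ℝ).rank = n)
    (k : ℕ) (hk1 : nuX n N x ≤ k) (hk2 : k ≤ N)
    (hnorm : ∀ I : Finset (Fin N), I.card = k → ∀ s ∈ I,
      ∑ t ∈ Iᶜ, |x s ⬝ᵥ ((gramOn n N x I)⁻¹ *ᵥ x t)| ≤ 1) :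
    ∀ θ : Fin n → ℝ, k ≤ (univ.filter (fun t => x t ⬝ᵥ θ = y t)).card →
      ∀ θ' : Fin n → ℝ, ∑ t, |y t - x t ⬝ᵥ θ| ≤ ∑ t, |y t - x t ⬝ᵥ θ'| := by
  intro θ hθ θ'
  obtain ⟨I, hIsub, hIcard⟩ := Finset.exists_subset_card_eq hθ
  have hI0 : ∀ s ∈ I, x s ⬝ᵥ θ = y s := fun s hs =>
    (Finset.mem_filter.mp (hIsub hs)).2
  -- the nuX set is nonempty: N belongs to it
  have hNmem : N ∈ {m : ℕ | ∀ S : Finset (Fin N), S.card = m →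
      (colSub n N x S).rank = n} := by
    intro S hS
    have : S = univ := by
      rwa [← Finset.card_eq_iff_eq_univ, Fintype.card_fin]
    subst this
    rw [colSub_rank_eq_span, Finset.coe_univ, Set.image_univ]
    rw [Matrix.rank_eq_finrank_span_cols] at hrank
    have h : Set.range x =
        Set.range (Matrix.of fun i t => x t i : Matrix (Fin n) (Fin N) ℝ).col := rfl
    rw [h]
    exact hrank
  have hnu := Nat.sInf_mem ⟨N, hNmem⟩
  -- rank of colSub I is n
  have hIrank : (colSub n N x I).rank = n := by
    obtain ⟨S, hSsub, hScard⟩ :=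
      Finset.exists_subset_card_eq (show nuX n N x ≤ I.card by rw [hIcard]; exact hk1)
    have hS : (colSub n N x S).rank = n := hnu S hScard
    have hle : (colSub n N x I).rank ≤ n := by
      have := (colSub n N x I).rank_le_card_height
      simpa using this
    have hge : n ≤ (colSub n N x I).rank := by
      rw [colSub_rank_eq_span] at hS ⊢
      have hmono : Module.finrank ℝ (Submodule.span ℝ (x '' ↑S)) ≤
          Module.finrank ℝ (Submodule.span ℝ (x '' ↑I)) :=
        Submodule.finrank_mono (Submodule.span_mono
          (Set.image_mono (by exact_mod_cast hSsub)))
      omega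
    omega
  have hG := gram_det_isUnit n N x I hIrank
  set δ : Fin n → ℝ := fun i => θ' i - θ i with hδdef
  have hsplit : ∀ t : Fin N, y t - x t ⬝ᵥ θ' = (y t - x t ⬝ᵥ θ) - x t ⬝ᵥ δ := by
    intro t
    have : x t ⬝ᵥ θ' = x t ⬝ᵥ θ + x t ⬝ᵥ δ := by
      simp only [dotProduct, hδdef, mul_sub, ← Finset.sum_add_distrib]
      refine Finset.sum_congr rfl fun i _ => by ring
    rw [this]; ring
  -- main inequality on I vs Iᶜ
  have hkey : ∑ t ∈ Iᶜ, |x t ⬝ᵥ δ| ≤ ∑ s ∈ I, |x s ⬝ᵥ δ| := by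
    calc ∑ t ∈ Iᶜ, |x t ⬝ᵥ δ|
        = ∑ t ∈ Iᶜ, |∑ s ∈ I, (x s ⬝ᵥ ((gramOn n N x I)⁻¹ *ᵥ x t)) * (x s ⬝ᵥ δ)| := by
          refine Finset.sum_congr rfl fun t _ => ?_
          rw [← key_identity n N x I hG δ t]
      _ ≤ ∑ t ∈ Iᶜ, ∑ s ∈ I, |x s ⬝ᵥ ((gramOn n N x I)⁻¹ *ᵥ x t)| * |x s ⬝ᵥ δ| := by
          refine Finset.sum_le_sum fun t _ => ?_
          refine (Finset.abs_sum_le_sum_abs _ _).trans ?_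
          refine Finset.sum_le_sum fun s _ => ?_
          rw [abs_mul]
      _ = ∑ s ∈ I, (∑ t ∈ Iᶜ, |x s ⬝ᵥ ((gramOn n N x I)⁻¹ *ᵥ x t)|) * |x s ⬝ᵥ δ| := by
          rw [Finset.sum_comm]
          exact Finset.sum_congr rfl fun s _ => by rw [Finset.sum_mul]
      _ ≤ ∑ s ∈ I, 1 * |x s ⬝ᵥ δ| := by
          refine Finset.sum_le_sum fun s hs => ?_
          exact mul_le_mul_of_nonneg_right (hnorm I hIcard s hs) (abs_nonneg _)
      _ = ∑ s ∈ I, |x s ⬝ᵥ δ| := by simp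
  -- put everything together
  have hL : ∑ t, |y t - x t ⬝ᵥ θ| = ∑ t ∈ Iᶜ, |y t - x t ⬝ᵥ θ| := by
    rw [← Finset.sum_add_sum_compl I]
    have : ∑ t ∈ I, |y t - x t ⬝ᵥ θ| = 0 := by
      refine Finset.sum_eq_zero fun t ht => ?_
      rw [hI0 t ht]; simp
    rw [this, zero_add]
  have hR : ∑ t, |y t - x t ⬝ᵥ θ'| =
      ∑ s ∈ I, |x s ⬝ᵥ δ| + ∑ t ∈ Iᶜ, |(y t - x t ⬝ᵥ θ) - x t ⬝ᵥ δ| := by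
    rw [← Finset.sum_add_sum_compl I]
    congr 1
    · refine Finset.sum_congr rfl fun s hs => ?_
      rw [hsplit s, hI0 s hs]
      simp [abs_sub_comm]
    · exact Finset.sum_congr rfl fun t _ => by rw [hsplit t]
  rw [hL, hR]
  have htri : ∑ t ∈ Iᶜ, |y t - x t ⬝ᵥ θ| ≤
      ∑ t ∈ Iᶜ, (|(y t - x t ⬝ᵥ θ) - x t ⬝ᵥ δ| + |x t ⬝ᵥ δ|) := by
    refine Finset.sum_le_sum fun t _ => ?_
    calc |y t - x t ⬝ᵥ θ| = |((y t - x t ⬝ᵥ θ) - x t ⬝ᵥ δ) + x t ⬝ᵥ δ| := by ring_nf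
      _ ≤ |(y t - x t ⬝ᵥ θ) - x t ⬝ᵥ δ| + |x t ⬝ᵥ δ| := abs_add_le _ _
  rw [Finset.sum_add_distrib] at htri
  linarith
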